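/- Let f(λ) = Σ_{i=1}^N c_i λ^{m_i} e^{−λ/b_i} with c_i ≥ 0 not all zero, m_i nonnegative integers with m_i ≤ M for all i, and 0 < b_i ≤ B for all i. Then for every λ > 0, −λ f′(λ) ≥ (λ/B − M) · f(λ), where f′ denotes the derivative of f. -/

import Mathlib

/-- Key step of the Lin condition: for `f(λ) = Σ_i c_i λ^{m_i} e^{-λ/b_i}` with `c_i ≥ 0`
not all zero, `m_i ≤ M`, and `0 < b_i ≤ B`, one has `-λ f'(λ) ≥ (λ/B - M) f(λ)` for all
`λ > 0`. -/
theorem stmt_1 (N : ℕ) (hN : 1 ≤ N) (c : Fin N → ℝ) (m : Fin N → ℕ) (M : ℕ)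
    (b : Fin N → ℝ) (B : ℝ)
    (hc : ∀ i, 0 ≤ c i) (hc0 : ∃ i, c i ≠ 0)
    (hm : ∀ i, m i ≤ M)
    (hb : ∀ i, 0 < b i) (hbB : ∀ i, b i ≤ B)
    (f : ℝ → ℝ)
    (hf : f = fun lam => ∑ i, c i * lam ^ (m i) * Real.exp (-lam / b i)) :
    ∀ lam : ℝ, 0 < lam → (lam / B - M) * f lam ≤ -lam * deriv f lam := by
  intro lam hlam
  have i0 : Fin N := ⟨0, hN⟩
  have hB : 0 < B := lt_of_lt_of_le (hb i0) (hbB i0)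
  subst hf
  have hder : ∀ i : Fin N, HasDerivAt (fun x : ℝ => c i * x ^ (m i) * Real.exp (-x / b i))
      (c i * ((m i : ℝ) * lam ^ (m i - 1) * Real.exp (-lam / b i)
        + lam ^ (m i) * (Real.exp (-lam / b i) * (-1 / b i)))) lam := by
    intro i
    have h1 : HasDerivAt (fun x : ℝ => x ^ (m i)) ((m i : ℝ) * lam ^ (m i - 1)) lam :=
      hasDerivAt_pow _ _
    have h0 : HasDerivAt (fun x : ℝ => -x / b i) (-1 / b i) lam := by
      simpa using ((hasDerivAt_id lam).neg.div_const (b i))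
    have h2 : HasDerivAt (fun x : ℝ => Real.exp (-x / b i))
        (Real.exp (-lam / b i) * (-1 / b i)) lam := (Real.hasDerivAt_exp _).comp lam h0
    have := (h1.mul h2).const_mul (c i)
    simpa [mul_assoc] using this
  have hF : HasDerivAt (fun x : ℝ => ∑ i, c i * x ^ (m i) * Real.exp (-x / b i))
      (∑ i, c i * ((m i : ℝ) * lam ^ (m i - 1) * Real.exp (-lam / b i)
        + lam ^ (m i) * (Real.exp (-lam / b i) * (-1 / b i)))) lam :=
    HasDerivAt.fun_sum fun i _ => hder i
  rw [hF.deriv]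
  rw [Finset.mul_sum, Finset.mul_sum]
  apply Finset.sum_le_sum
  intro i _
  have he : 0 < Real.exp (-lam / b i) := Real.exp_pos _
  have hbi := hb i
  have hA : 0 ≤ c i * lam ^ (m i) * Real.exp (-lam / b i) :=
    mul_nonneg (mul_nonneg (hc i) (pow_nonneg hlam.le _)) he.le
  have h1 : lam / B ≤ lam / b i := by
    apply div_le_div_of_nonneg_left hlam.le hbi (hbB i)
  have h2 : (m i : ℝ) ≤ M := Nat.cast_le.mpr (hm i)
  have hrhs : -lam * (c i * ((m i : ℝ) * lam ^ (m i - 1) * Real.exp (-lam / b i)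
        + lam ^ (m i) * (Real.exp (-lam / b i) * (-1 / b i))))
      = (c i * lam ^ (m i) * Real.exp (-lam / b i)) * (lam / b i - (m i : ℝ)) := by
    rcases Nat.eq_zero_or_pos (m i) with h | h
    · simp only [h, Nat.cast_zero, pow_zero]
      field_simp
      ring
    · obtain ⟨k, hk⟩ := Nat.exists_eq_succ_of_ne_zero h.ne'
      rw [hk]
      simp only [Nat.succ_sub_one, pow_succ, Nat.cast_succ]
      field_simp
      ring
  rw [hrhs]
  have key : lam / B - (M : ℝ) ≤ lam / b i - (m i : ℝ) := by linarith
  calc (lam / B - (M : ℝ)) * (c i * lam ^ (m i) * Real.exp (-lam / b i))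
      = (c i * lam ^ (m i) * Real.exp (-lam / b i)) * (lam / B - (M : ℝ)) := by ring
    _ ≤ (c i * lam ^ (m i) * Real.exp (-lam / b i)) * (lam / b i - (m i : ℝ)) :=
        mul_le_mul_of_nonneg_left key hA
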